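/- arXiv:2302.14302 — 3 statements merged into one kernel-verified Lean document; each statement's English description precedes it below -/
import Mathlib

section
/- For a bounded loss ℓ(θ, ·) and distribution P_z on a latent space with compact support, the supremum over distributions P' within W_∞-distance ε_z of P_z of E_{z'∼P'}[ℓ(θ, g^{-1}(z'))] equals E_{z∼P_z}[ sup_{‖δ_z‖_∞ ≤ ε_z} ℓ(θ, g^{-1}(z + δ_z)) ]. -/
open MeasureTheory ENNReal NNReal

/-- The ∞-Wasserstein distance: infimum over couplings of the essential
supremum of the (ℓ∞) distance. -/
noncomputable def Winf {E : Type*} [MeasurableSpace E] [NormedAddCommGroup E]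
    (P Q : Measure E) : ℝ≥0∞ :=
  ⨅ (π : Measure (E × E)) (_ : π.map Prod.fst = P ∧ π.map Prod.snd = Q),
    essSup (fun p => (‖p.1 - p.2‖₊ : ℝ≥0∞)) π

open Metric Set Filter TopologicalSpace

private lemma integrable_of_bdd' {α : Type*} [MeasurableSpace α] {μ : Measure α}
    [IsFiniteMeasure μ] {f : α → ℝ} (hm : AEStronglyMeasurable f μ) {M : ℝ}
    (h0 : ∀ x, 0 ≤ f x) (hM : ∀ x, f x ≤ M) : Integrable f μ :=
  ⟨hm, HasFiniteIntegral.of_bounded (C := M) (Filter.Eventually.of_forall fun x => by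
    rw [Real.norm_eq_abs, abs_of_nonneg (h0 x)]; exact hM x)⟩

set_option maxHeartbeats 2000000 in
private lemma main_aux (d : ℕ) (M εz : ℝ) (hεz : 0 ≤ εz) (hM : 0 ≤ M)
    (f : (Fin d → ℝ) → ℝ) (hf : Continuous f)
    (hf0 : ∀ x, 0 ≤ f x) (hfM : ∀ x, f x ≤ M)
    (Pz : Measure (Fin d → ℝ)) [IsProbabilityMeasure Pz]
    (K : Set (Fin d → ℝ)) (hK : IsCompact K) (hKsupp : Pz Kᶜ = 0) :
    sSup {r : ℝ | ∃ P' : Measure (Fin d → ℝ), IsProbabilityMeasure P' ∧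
        Winf Pz P' ≤ ENNReal.ofReal εz ∧ r = ∫ z', f z' ∂P'}
      = ∫ z, sSup {r : ℝ | ∃ δz : Fin d → ℝ, ‖δz‖ ≤ εz ∧ r = f (z + δz)} ∂Pz := by
  classical
  set φ : (Fin d → ℝ) → ℝ :=
    fun z => sSup {r : ℝ | ∃ δz : Fin d → ℝ, ‖δz‖ ≤ εz ∧ r = f (z + δz)} with hφdef
  set S := {r : ℝ | ∃ P' : Measure (Fin d → ℝ), IsProbabilityMeasure P' ∧
      Winf Pz P' ≤ ENNReal.ofReal εz ∧ r = ∫ z', f z' ∂P'} with hSdef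
  -- Basic facts about φ
  have hne' : ∀ z : Fin d → ℝ,
      f z ∈ {r : ℝ | ∃ δz : Fin d → ℝ, ‖δz‖ ≤ εz ∧ r = f (z + δz)} :=
    fun z => ⟨0, by simpa using hεz, by simp⟩
  have hbdd' : ∀ z : Fin d → ℝ,
      BddAbove {r : ℝ | ∃ δz : Fin d → ℝ, ‖δz‖ ≤ εz ∧ r = f (z + δz)} := by
    intro z
    refine ⟨M, ?_⟩
    rintro r ⟨δ, -, rfl⟩
    exact hfM _
  have hφ_mem : ∀ z δ, ‖δ‖ ≤ εz → f (z + δ) ≤ φ z :=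
    fun z δ hδ => le_csSup (hbdd' z) ⟨δ, hδ, rfl⟩
  have hφ0 : ∀ z, 0 ≤ φ z := fun z =>
    (hf0 z).trans (by simpa using hφ_mem z 0 (by simpa using hεz))
  have hφM : ∀ z, φ z ≤ M := by
    intro z
    refine csSup_le ⟨_, hne' z⟩ ?_
    rintro r ⟨δ, -, rfl⟩
    exact hfM _
  -- A dense sequence in the closed ball
  haveI : Nonempty (closedBall (0 : Fin d → ℝ) εz) := ⟨⟨0, mem_closedBall_self hεz⟩⟩
  obtain ⟨u, hu⟩ := exists_dense_seq (closedBall (0 : Fin d → ℝ) εz)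
  set e : ℕ → (Fin d → ℝ) := fun n => (u n : Fin d → ℝ) with hedef
  have he : ∀ n, ‖e n‖ ≤ εz := fun n => mem_closedBall_zero_iff.mp (u n).2
  have hdense : ∀ δ : Fin d → ℝ, ‖δ‖ ≤ εz → ∀ ε > 0, ∃ n, dist (e n) δ < ε := by
    intro δ hδ ε hε
    obtain ⟨n, hn⟩ := hu.exists_dist_lt
      (⟨δ, mem_closedBall_zero_iff.mpr hδ⟩ : closedBall (0 : Fin d → ℝ) εz) hε
    refine ⟨n, ?_⟩
    rw [Subtype.dist_eq] at hn
    simpa [dist_comm] using hn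
  have hrbdd : ∀ z, BddAbove (Set.range fun n => f (z + e n)) := by
    intro z
    refine ⟨M, ?_⟩
    rintro r ⟨n, rfl⟩
    exact hfM _
  -- φ equals a countable supremum
  have hA : ∀ z, φ z = ⨆ n, f (z + e n) := by
    intro z
    apply le_antisymm
    · refine csSup_le ⟨_, hne' z⟩ ?_
      rintro r ⟨δ, hδ, rfl⟩
      apply _root_.le_of_forall_pos_le_add
      intro c hc
      obtain ⟨ε, hε, hcont⟩ := Metric.continuousAt_iff.mp (hf.continuousAt (x := z + δ)) c hc
      obtain ⟨n, hn⟩ := hdense δ hδ ε hε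
      have hd : dist (z + e n) (z + δ) < ε := by rwa [dist_add_left]
      have h2 := hcont hd
      rw [Real.dist_eq] at h2
      have h1 : f (z + δ) ≤ f (z + e n) + c := by
        rcases abs_lt.mp h2 with ⟨h3, h4⟩
        linarith
      exact h1.trans (add_le_add_left (le_ciSup (hrbdd z) n) c)
    · exact ciSup_le fun n => hφ_mem z (e n) (he n)
  have hφm : Measurable φ := by
    have hm : ∀ n : ℕ, Measurable fun z : Fin d → ℝ => f (z + e n) := fun n =>
      (hf.comp (continuous_id.add continuous_const)).measurable
    have : φ = fun z => ⨆ n, f (z + e n) := funext hA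
    rw [this]
    exact Measurable.iSup hm
  have hφint : Integrable φ Pz := integrable_of_bdd' hφm.aestronglyMeasurable hφ0 hφM
  -- S is bounded above
  have hSbdd : BddAbove S := by
    refine ⟨M, ?_⟩
    rintro r ⟨P', hP', -, rfl⟩
    calc ∫ z', f z' ∂P' ≤ ∫ _z', M ∂P' :=
          integral_mono (integrable_of_bdd' hf.aestronglyMeasurable hf0 hfM)
            (integrable_const M) (fun x => hfM x)
      _ = M := by simp
  -- Lower bound: construction of near optimal transports
  have hlower : ∀ η : ℝ, 0 < η → ∃ r ∈ S, (∫ z, φ z ∂Pz) - η ≤ r := by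
    intro η hη
    have hex : ∀ z, ∃ n, φ z - η < f (z + e n) := by
      intro z
      have h1 : φ z - η < ⨆ n, f (z + e n) := by rw [← hA]; linarith
      exact exists_lt_of_lt_ciSup h1
    have hmeasset : ∀ k, MeasurableSet {z : Fin d → ℝ | φ z - η < f (z + e k)} := fun k =>
      measurableSet_lt (hφm.sub measurable_const)
        (hf.comp (continuous_id.add continuous_const)).measurable
    have hnzm : Measurable fun z => Nat.find (hex z) := measurable_find hex hmeasset
    set T : (Fin d → ℝ) → (Fin d → ℝ) := fun z => z + e (Nat.find (hex z)) with hTdef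
    have hem : Measurable fun z : Fin d → ℝ => e (Nat.find (hex z)) :=
      Measurable.comp (g := e) (f := fun z => Nat.find (hex z)) measurable_from_top hnzm
    have hTm : Measurable T := measurable_id.add hem
    have hTgood : ∀ z, φ z - η < f (T z) := fun z => Nat.find_spec (hex z)
    have hTdist : ∀ z, ‖z - T z‖ ≤ εz := by
      intro z
      have : z - T z = -(e (Nat.find (hex z))) := sub_add_cancel_left _ _
      rw [this, norm_neg]
      exact he _
    set π := Pz.map (fun z => (z, T z)) with hπdef
    have hpairm : Measurable fun z : Fin d → ℝ => (z, T z) := measurable_id.prodMk hTm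
    have hfst : π.map Prod.fst = Pz := by
      rw [hπdef, Measure.map_map measurable_fst hpairm]
      have : (Prod.fst ∘ fun z : Fin d → ℝ => (z, T z)) = id := rfl
      rw [this, Measure.map_id]
    have hsnd : π.map Prod.snd = Pz.map T := by
      rw [hπdef, Measure.map_map measurable_snd hpairm]
      rfl
    haveI hP' : IsProbabilityMeasure (Pz.map T) := Measure.isProbabilityMeasure_map hTm.aemeasurable
    have hW : Winf Pz (Pz.map T) ≤ ENNReal.ofReal εz := by
      refine le_trans ?_ (essSup_le_of_ae_le (μ := π)
        (f := fun p : (Fin d → ℝ) × (Fin d → ℝ) => (‖p.1 - p.2‖₊ : ℝ≥0∞))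
        (ENNReal.ofReal εz) ?_)
      · exact iInf₂_le π ⟨hfst, hsnd⟩
      · rw [hπdef]
        show ∀ᵐ p ∂(Measure.map (fun z => (z, T z)) Pz),
          (‖p.1 - p.2‖₊ : ℝ≥0∞) ≤ ENNReal.ofReal εz
        rw [MeasureTheory.ae_map_iff hpairm.aemeasurable
          (measurableSet_le (f := fun p : (Fin d → ℝ) × (Fin d → ℝ) => (‖p.1 - p.2‖₊ : ℝ≥0∞))
            ((measurable_fst.sub measurable_snd).nnnorm.coe_nnreal_ennreal) measurable_const)]
        refine Filter.Eventually.of_forall fun z => ?_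
        simp only
        rw [← enorm_eq_nnnorm, ← ofReal_norm]
        exact ENNReal.ofReal_le_ofReal (hTdist z)
    refine ⟨∫ z', f z' ∂(Pz.map T), ⟨Pz.map T, hP', hW, rfl⟩, ?_⟩
    rw [integral_map hTm.aemeasurable hf.aestronglyMeasurable]
    have hintT : Integrable (fun z => f (T z)) Pz :=
      integrable_of_bdd' (hf.measurable.comp hTm).aestronglyMeasurable
        (fun z => hf0 _) (fun z => hfM _)
    have hles : ∫ z, (φ z - η) ∂Pz ≤ ∫ z, f (T z) ∂Pz := by
      refine integral_mono (hφint.sub (integrable_const η)) hintT fun z => ?_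
      dsimp only
      linarith [hTgood z]
    have heq : ∫ z, (φ z - η) ∂Pz = (∫ z, φ z ∂Pz) - η := by
      rw [integral_sub hφint (integrable_const η), integral_const]
      simp
    linarith
  have hSne : S.Nonempty := by
    obtain ⟨r, hrS, -⟩ := hlower 1 one_pos
    exact ⟨r, hrS⟩
  -- Upper bound
  have hupper : ∀ c : ℝ, 0 < c → ∀ r ∈ S, r ≤ (∫ z, φ z ∂Pz) + c := by
    intro c hc r hr
    obtain ⟨P', hP', hW, rfl⟩ := hr
    have hC : IsCompact (cthickening (εz + 1) K) := hK.cthickening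
    have huc := hC.uniformContinuousOn_of_continuous hf.continuousOn
    obtain ⟨η0, hη0, hkey0⟩ := Metric.uniformContinuousOn_iff.mp huc c hc
    set η := min η0 1 / 2 with hηdef
    have hmin : 0 < min η0 1 := lt_min hη0 one_pos
    have hη : 0 < η := by rw [hηdef]; linarith
    have hη1 : η ≤ 1 := by
      have := min_le_right η0 1
      rw [hηdef]; linarith
    have hηη0 : η < η0 := by
      have := min_le_left η0 1
      rw [hηdef]; linarith
    -- key pointwise inequality
    have hkey : ∀ z ∈ K, ∀ δ : Fin d → ℝ, ‖δ‖ ≤ εz + η → f (z + δ) ≤ φ z + c := by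
      intro z hz δ hδ
      have hpos : 0 < εz + η := by linarith
      set t := εz / (εz + η) with htdef
      have ht0 : 0 ≤ t := div_nonneg hεz hpos.le
      have ht1 : t ≤ 1 := by
        rw [htdef, div_le_one hpos]; linarith
      have h1 : ‖t • δ‖ ≤ εz := by
        rw [norm_smul, Real.norm_eq_abs, abs_of_nonneg ht0]
        calc t * ‖δ‖ ≤ t * (εz + η) := mul_le_mul_of_nonneg_left hδ ht0
          _ = εz := by rw [htdef]; field_simp
      have h2 : ‖δ - t • δ‖ ≤ η := by
        have hδ' : δ - t • δ = (1 - t) • δ := by rw [sub_smul, one_smul]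
        rw [hδ', norm_smul, Real.norm_eq_abs, abs_of_nonneg (by linarith)]
        calc (1 - t) * ‖δ‖ ≤ (1 - t) * (εz + η) :=
              mul_le_mul_of_nonneg_left hδ (by linarith)
          _ = η := by rw [htdef]; field_simp; ring
      have hmem1 : z + δ ∈ cthickening (εz + 1) K := by
        refine mem_cthickening_of_dist_le (z + δ) z _ _ hz ?_
        rw [dist_eq_norm, add_sub_cancel_left]
        linarith
      have hmem2 : z + t • δ ∈ cthickening (εz + 1) K := by
        refine mem_cthickening_of_dist_le (z + t • δ) z _ _ hz ?_
        rw [dist_eq_norm, add_sub_cancel_left]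
        linarith
      have hd : dist (z + δ) (z + t • δ) < η0 := by
        rw [dist_add_left, dist_eq_norm]
        linarith
      have h3 := hkey0 _ hmem1 _ hmem2 hd
      rw [Real.dist_eq] at h3
      have h4 := hφ_mem z (t • δ) h1
      rcases abs_lt.mp h3 with ⟨h5, h6⟩
      linarith
    -- extract a good coupling
    have hlt : Winf Pz P' < ENNReal.ofReal (εz + η) := by
      refine lt_of_le_of_lt hW ?_
      exact (ENNReal.ofReal_lt_ofReal_iff_of_nonneg hεz).mpr (by linarith)
    rw [Winf, iInf_lt_iff] at hlt
    obtain ⟨π, hlt⟩ := hlt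
    rw [iInf_lt_iff] at hlt
    obtain ⟨⟨hfst, hsnd⟩, hess⟩ := hlt
    have hae1 : ∀ᵐ p ∂π, (‖p.1 - p.2‖₊ : ℝ≥0∞) < ENNReal.ofReal (εz + η) :=
      ae_lt_of_essSup_lt hess
    have hae1' : ∀ᵐ p ∂π, ‖p.1 - p.2‖ ≤ εz + η := by
      filter_upwards [hae1] with p hp
      rw [← enorm_eq_nnnorm, ← ofReal_norm] at hp
      exact le_of_lt ((ENNReal.ofReal_lt_ofReal_iff_of_nonneg (norm_nonneg _)).mp hp)
    have hae2 : ∀ᵐ p ∂π, p.1 ∈ K := by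
      have hmap : π (Prod.fst ⁻¹' Kᶜ) = 0 := by
        rw [← Measure.map_apply measurable_fst hK.isClosed.measurableSet.compl, hfst]
        exact hKsupp
      rw [MeasureTheory.ae_iff]
      exact hmap
    haveI : IsProbabilityMeasure π := by
      constructor
      have h1 : π.map Prod.fst Set.univ = 1 := by rw [hfst]; simp
      rwa [Measure.map_apply measurable_fst MeasurableSet.univ, Set.preimage_univ] at h1
    have hre : ∫ z', f z' ∂P' = ∫ p, f p.2 ∂π := by
      rw [← hsnd, integral_map measurable_snd.aemeasurable hf.aestronglyMeasurable]
    have hφe : ∫ z, φ z ∂Pz = ∫ p, φ p.1 ∂π := by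
      rw [← hfst, integral_map measurable_fst.aemeasurable hφm.aestronglyMeasurable]
    have hint1 : Integrable (fun p : (Fin d → ℝ) × (Fin d → ℝ) => f p.2) π :=
      integrable_of_bdd' (hf.measurable.comp measurable_snd).aestronglyMeasurable
        (fun p => hf0 _) (fun p => hfM _)
    have hint2 : Integrable (fun p : (Fin d → ℝ) × (Fin d → ℝ) => φ p.1) π :=
      integrable_of_bdd' (hφm.comp measurable_fst).aestronglyMeasurable
        (fun p => hφ0 _) (fun p => hφM _)
    have hles : ∫ p, f p.2 ∂π ≤ ∫ p, (φ p.1 + c) ∂π := by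
      apply integral_mono_ae hint1 (hint2.add (integrable_const c))
      filter_upwards [hae1', hae2] with p h1 h2
      have h3 : ‖p.2 - p.1‖ ≤ εz + η := by rwa [norm_sub_rev]
      have h4 := hkey p.1 h2 (p.2 - p.1) h3
      simpa using h4
    have heq2 : ∫ p, (φ p.1 + c) ∂π = (∫ p, φ p.1 ∂π) + c := by
      rw [integral_add hint2 (integrable_const c), integral_const]
      simp
    rw [hre, hφe]
    linarith
  -- conclude
  apply le_antisymm
  · apply _root_.le_of_forall_pos_le_add
    intro c hc
    exact csSup_le hSne (fun r hr => hupper c hc r hr)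
  · apply _root_.le_of_forall_pos_le_add
    intro η hη
    obtain ⟨r, hrS, hr⟩ := hlower η hη
    have h1 := le_csSup hSbdd hrS
    linarith

/-- For a continuous bounded loss `ℓ` (`0 ≤ ℓ ≤ M`), a continuous decoder `g⁻¹`, and a
compactly supported probability distribution `P_z` on the latent space, the supremum over
distributions `P'` within `W_∞`-distance `ε_z` of `P_z` of `E_{z'∼P'}[ℓ(g⁻¹(z'))]` equals
`E_{z∼P_z}[ sup_{‖δ_z‖_∞ ≤ ε_z} ℓ(g⁻¹(z + δ_z)) ]`. -/
theorem stmt2 (d d0 : ℕ) (M εz : ℝ) (hεz : 0 ≤ εz) (hM : 0 ≤ M)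
    (ℓ : (Fin d0 → ℝ) → ℝ) (hℓc : Continuous ℓ)
    (hℓ0 : ∀ x, 0 ≤ ℓ x) (hℓM : ∀ x, ℓ x ≤ M)
    (ginv : (Fin d → ℝ) → (Fin d0 → ℝ)) (hginv : Continuous ginv)
    (Pz : Measure (Fin d → ℝ)) [IsProbabilityMeasure Pz]
    (K : Set (Fin d → ℝ)) (hK : IsCompact K) (hKsupp : Pz Kᶜ = 0) :
    sSup {r : ℝ | ∃ P' : Measure (Fin d → ℝ), IsProbabilityMeasure P' ∧
        Winf Pz P' ≤ ENNReal.ofReal εz ∧ r = ∫ z', ℓ (ginv z') ∂P'}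
      = ∫ z, sSup {r : ℝ | ∃ δz : Fin d → ℝ, ‖δz‖ ≤ εz ∧ r = ℓ (ginv (z + δz))} ∂Pz :=
  main_aux d M εz hεz hM (fun z => ℓ (ginv z)) (hℓc.comp hginv)
    (fun x => hℓ0 _) (fun x => hℓM _) Pz K hK hKsupp
end

section
/- Suppose every sample from every distribution P in the W_∞-ball of radius ε around P_0 lies on the manifold, i.e., ℓ(θ,v) = ℓ(θ, g^{-1}(g(v))) almost surely. Then sup_{P : W_∞(P_0,P) ≤ ε} E_{x'∼P}[ℓ(θ, x')] ≤ E_{x∼P_0}[ sup_{‖δ_z‖_∞ ≤ ε_z} ℓ(θ, g^{-1}(g(x) + δ_z)) ], where ε_z = sup_{x, ‖δ_x‖_∞ ≤ ε} ‖g(x) - g(x+δ_x)‖_∞. -/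
open MeasureTheory ENNReal NNReal

/-- Lemma 1 of the paper: if every sample from every `P` in the `W_∞`-ball of radius `ε`
around `P_0` lies on the manifold (`ℓ(v) = ℓ(g⁻¹(g(v)))` a.s.), then
`sup_{P : W_∞(P_0,P) ≤ ε} E_{x'∼P}[ℓ(x')]
  ≤ E_{x∼P_0}[ sup_{‖δ_z‖_∞ ≤ ε_z} ℓ(g⁻¹(g(x) + δ_z)) ]`,
where `ε_z = sup_{x, ‖δ_x‖_∞ ≤ ε} ‖g(x) - g(x + δ_x)‖_∞`. -/
theorem stmt3 (d0 d : ℕ) (ε εz M : ℝ) (hε : 0 ≤ ε)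
    (g : (Fin d0 → ℝ) → (Fin d → ℝ)) (hg : Continuous g)
    (ginv : (Fin d → ℝ) → (Fin d0 → ℝ)) (hginv : Continuous ginv)
    (ℓ : (Fin d0 → ℝ) → ℝ) (hℓc : Continuous ℓ)
    (hℓ0 : ∀ x, 0 ≤ ℓ x) (hℓM : ∀ x, ℓ x ≤ M)
    (hrecon : ∀ x, ℓ (ginv (g x)) = ℓ x)
    (hbdd : BddAbove {r : ℝ | ∃ x δx : Fin d0 → ℝ, ‖δx‖ ≤ ε ∧ r = ‖g x - g (x + δx)‖})
    (hεz : εz = sSup {r : ℝ | ∃ x δx : Fin d0 → ℝ, ‖δx‖ ≤ ε ∧ r = ‖g x - g (x + δx)‖})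
    (P0 : Measure (Fin d0 → ℝ)) [IsProbabilityMeasure P0]
    (K : Set (Fin d0 → ℝ)) (hK : IsCompact K) (hKsupp : P0 Kᶜ = 0)
    (hmanifold : ∀ P : Measure (Fin d0 → ℝ), IsProbabilityMeasure P →
      Winf P0 P ≤ ENNReal.ofReal ε → ∀ᵐ v ∂P, ℓ v = ℓ (ginv (g v))) :
    sSup {r : ℝ | ∃ P : Measure (Fin d0 → ℝ), IsProbabilityMeasure P ∧
        Winf P0 P ≤ ENNReal.ofReal ε ∧ r = ∫ x', ℓ x' ∂P}
      ≤ ∫ x, sSup {r : ℝ | ∃ δz : Fin d → ℝ, ‖δz‖ ≤ εz ∧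
          r = ℓ (ginv (g x + δz))} ∂P0 := by
  classical
  have hM0 : (0 : ℝ) ≤ M := le_trans (hℓ0 0) (hℓM 0)
  -- basic facts about εz
  have h0T : (0 : ℝ) ∈ {r : ℝ | ∃ x δx : Fin d0 → ℝ, ‖δx‖ ≤ ε ∧ r = ‖g x - g (x + δx)‖} :=
    ⟨0, 0, by simpa using hε, by simp⟩
  have hεz0 : 0 ≤ εz := hεz ▸ le_csSup hbdd h0T
  have keyA : ∀ x δx : Fin d0 → ℝ, ‖δx‖ ≤ ε → ‖g x - g (x + δx)‖ ≤ εz :=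
    fun x δx h => hεz ▸ le_csSup hbdd ⟨x, δx, h, rfl⟩
  -- the function F
  set F : (Fin d0 → ℝ) → ℝ := fun x =>
    sSup {r : ℝ | ∃ δz : Fin d → ℝ, ‖δz‖ ≤ εz ∧ r = ℓ (ginv (g x + δz))} with hF
  have hFne : ∀ x, ({r : ℝ | ∃ δz : Fin d → ℝ, ‖δz‖ ≤ εz ∧
      r = ℓ (ginv (g x + δz))}).Nonempty :=
    fun x => ⟨ℓ (ginv (g x + 0)), 0, by simpa using hεz0, rfl⟩
  have hFbdd : ∀ x, BddAbove {r : ℝ | ∃ δz : Fin d → ℝ, ‖δz‖ ≤ εz ∧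
      r = ℓ (ginv (g x + δz))} := by
    intro x
    refine ⟨M, ?_⟩
    rintro r ⟨δz, -, rfl⟩
    exact hℓM _
  have hFle : ∀ (x : Fin d0 → ℝ) (δz : Fin d → ℝ), ‖δz‖ ≤ εz →
      ℓ (ginv (g x + δz)) ≤ F x :=
    fun x δz h => le_csSup (hFbdd x) ⟨δz, h, rfl⟩
  have hF0 : ∀ x, 0 ≤ F x := fun x =>
    le_trans (hℓ0 _) (hFle x 0 (by simpa using hεz0))
  have hFM : ∀ x, F x ≤ M := by
    intro x
    refine csSup_le (hFne x) ?_
    rintro r ⟨δz, -, rfl⟩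
    exact hℓM _
  -- continuity of F
  have hFc : Continuous F := by
    rw [Metric.continuous_iff]
    intro x0 ρ hρ
    have hCcomp : IsCompact (Metric.closedBall (g x0) (εz + 1)) :=
      isCompact_closedBall _ _
    obtain ⟨s, hs, hsc⟩ := (Metric.uniformContinuousOn_iff.mp
      (hCcomp.uniformContinuousOn_of_continuous ((hℓc.comp hginv).continuousOn)))
      (ρ / 2) (by linarith)
    obtain ⟨t, ht, htc⟩ := Metric.continuous_iff.mp hg x0 (min s 1) (lt_min hs one_pos)
    refine ⟨t, ht, fun x hxt => ?_⟩
    have hgd : dist (g x) (g x0) < min s 1 := htc x hxt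
    have hcomp : ∀ x1 x2 : Fin d0 → ℝ, dist (g x1) (g x0) ≤ 1 →
        dist (g x2) (g x0) ≤ 1 → dist (g x1) (g x2) < s → F x1 ≤ F x2 + ρ / 2 := by
      intro x1 x2 h1 h2 h12
      refine csSup_le (hFne x1) ?_
      rintro r ⟨δz, hδz, rfl⟩
      have ha : g x1 + δz ∈ Metric.closedBall (g x0) (εz + 1) := by
        rw [Metric.mem_closedBall]
        calc dist (g x1 + δz) (g x0) ≤ dist (g x1 + δz) (g x0 + δz) + dist (g x0 + δz) (g x0) :=
              dist_triangle _ _ _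
          _ ≤ 1 + εz := by
              rw [dist_add_right]
              have : dist (g x0 + δz) (g x0) = ‖δz‖ := by
                rw [dist_eq_norm]; simp
              rw [this]; exact add_le_add h1 hδz
          _ = εz + 1 := by ring
      have hb : g x2 + δz ∈ Metric.closedBall (g x0) (εz + 1) := by
        rw [Metric.mem_closedBall]
        calc dist (g x2 + δz) (g x0) ≤ dist (g x2 + δz) (g x0 + δz) + dist (g x0 + δz) (g x0) :=
              dist_triangle _ _ _
          _ ≤ 1 + εz := by
              rw [dist_add_right]
              have : dist (g x0 + δz) (g x0) = ‖δz‖ := by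
                rw [dist_eq_norm]; simp
              rw [this]; exact add_le_add h2 hδz
          _ = εz + 1 := by ring
      have hd : dist (g x1 + δz) (g x2 + δz) < s := by rwa [dist_add_right]
      have := hsc _ ha _ hb hd
      rw [Function.comp, Function.comp, Real.dist_eq] at this
      have h1' : ℓ (ginv (g x1 + δz)) ≤ ℓ (ginv (g x2 + δz)) + ρ / 2 := by
        have := abs_lt.mp this
        linarith [this.2]
      exact le_trans h1' (add_le_add_left (hFle x2 δz hδz) _)
    have hle1 : dist (g x) (g x0) ≤ 1 := le_of_lt (lt_of_lt_of_le hgd (min_le_right _ _))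
    have hles : dist (g x) (g x0) < s := lt_of_lt_of_le hgd (min_le_left _ _)
    have hA : F x ≤ F x0 + ρ / 2 := hcomp x x0 hle1 (by simp) hles
    have hB : F x0 ≤ F x + ρ / 2 := hcomp x0 x (by simp) hle1 (by rwa [dist_comm])
    rw [Real.dist_eq, abs_lt]
    constructor <;> linarith
  have hFint : Integrable F P0 :=
    Integrable.mono' (integrable_const M) hFc.aestronglyMeasurable
      (Filter.Eventually.of_forall fun x => by
        rw [Real.norm_eq_abs, abs_of_nonneg (hF0 x)]; exact hFM x)
  have hRHS0 : 0 ≤ ∫ x, F x ∂P0 := integral_nonneg hF0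
  refine Real.sSup_le ?_ hRHS0
  rintro r ⟨P, hPprob, hW, rfl⟩
  haveI := hPprob
  -- it suffices to prove the bound up to any c > 0
  by_contra hcon
  push_neg at hcon
  set c : ℝ := ((∫ x', ℓ x' ∂P) - ∫ x, F x ∂P0) / 2 with hc
  have hcpos : 0 < c := by simp only [hc]; linarith
  suffices hsuff : (∫ x', ℓ x' ∂P) ≤ (∫ x, F x ∂P0) + c by
    simp only [hc] at hsuff; linarith
  -- compact bounds
  obtain ⟨R1, hR1⟩ := hK.isBounded.subset_closedBall (0 : Fin d0 → ℝ)
  obtain ⟨R0, hR0⟩ := (hK.image hg).isBounded.subset_closedBall (0 : Fin d → ℝ)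
  have hR1K : ∀ x ∈ K, ‖x‖ ≤ R1 := fun x hx =>
    mem_closedBall_zero_iff.mp (hR1 hx)
  have hR0K : ∀ x ∈ K, ‖g x‖ ≤ R0 := fun x hx =>
    mem_closedBall_zero_iff.mp (hR0 ⟨x, hx, rfl⟩)
  -- uniform continuity of ℓ ∘ ginv on a big ball
  obtain ⟨s, hs, hsc⟩ := (Metric.uniformContinuousOn_iff.mp
    ((isCompact_closedBall (0 : Fin d → ℝ) (R0 + εz + 1)).uniformContinuousOn_of_continuous
      ((hℓc.comp hginv).continuousOn))) c hcpos
  set s1 : ℝ := min s 1 / 2 with hs1def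
  have hmins1 : 0 < min s 1 := lt_min hs one_pos
  have hs1pos : 0 < s1 := by simp only [hs1def]; linarith
  have hs1le1 : s1 ≤ 1 := by
    have : min s 1 ≤ 1 := min_le_right _ _
    simp only [hs1def]; linarith
  have hs1lts : s1 < s := by
    have : min s 1 ≤ s := min_le_left _ _
    simp only [hs1def]; linarith
  -- uniform continuity of g on a big ball
  obtain ⟨η, hη, hηc⟩ := (Metric.uniformContinuousOn_iff.mp
    ((isCompact_closedBall (0 : Fin d0 → ℝ) (R1 + ε + 1)).uniformContinuousOn_of_continuous
      hg.continuousOn)) s1 hs1pos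
  set η' : ℝ := min η 1 / 2 with hη'def
  have hminη : 0 < min η 1 := lt_min hη one_pos
  have hη'pos : 0 < η' := by simp only [hη'def]; linarith
  have hη'le1 : η' ≤ 1 := by
    have : min η 1 ≤ 1 := min_le_right _ _
    simp only [hη'def]; linarith
  have hη'ltη : η' < η := by
    have : min η 1 ≤ η := min_le_left _ _
    simp only [hη'def]; linarith
  -- the key geometric estimate
  have hgest : ∀ x ∈ K, ∀ δ : Fin d0 → ℝ, ‖δ‖ ≤ ε + η' →
      ‖g x - g (x + δ)‖ ≤ εz + s1 := by
    intro x hx δ hδ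
    have hεη : 0 < ε + η' := by linarith
    set δ' : Fin d0 → ℝ := (ε / (ε + η')) • δ with hδ'def
    have hδ'norm : ‖δ'‖ ≤ ε := by
      rw [hδ'def, norm_smul, Real.norm_eq_abs, abs_of_nonneg (by positivity)]
      calc ε / (ε + η') * ‖δ‖ ≤ ε / (ε + η') * (ε + η') := by
            apply mul_le_mul_of_nonneg_left hδ (by positivity)
        _ = ε := div_mul_cancel₀ _ hεη.ne'
    have h1 : ‖g x - g (x + δ')‖ ≤ εz := keyA x δ' hδ'norm
    have hδδ' : ‖δ - δ'‖ ≤ η' := by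
      have : δ - δ' = (η' / (ε + η')) • δ := by
        symm
        rw [hδ'def, eq_sub_iff_add_eq, ← add_smul,
          show η' / (ε + η') + ε / (ε + η') = 1 from by field_simp; ring, one_smul]
      rw [this, norm_smul, Real.norm_eq_abs, abs_of_nonneg (by positivity)]
      calc η' / (ε + η') * ‖δ‖ ≤ η' / (ε + η') * (ε + η') := by
            apply mul_le_mul_of_nonneg_left hδ (by positivity)
        _ = η' := div_mul_cancel₀ _ hεη.ne'
    have hxK : ‖x‖ ≤ R1 := hR1K x hx
    have hmem1 : x + δ ∈ Metric.closedBall (0 : Fin d0 → ℝ) (R1 + ε + 1) := by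
      rw [mem_closedBall_zero_iff]
      calc ‖x + δ‖ ≤ ‖x‖ + ‖δ‖ := norm_add_le _ _
        _ ≤ R1 + (ε + η') := add_le_add hxK hδ
        _ ≤ R1 + ε + 1 := by linarith
    have hmem2 : x + δ' ∈ Metric.closedBall (0 : Fin d0 → ℝ) (R1 + ε + 1) := by
      rw [mem_closedBall_zero_iff]
      calc ‖x + δ'‖ ≤ ‖x‖ + ‖δ'‖ := norm_add_le _ _
        _ ≤ R1 + ε := add_le_add hxK hδ'norm
        _ ≤ R1 + ε + 1 := by linarith
    have hdist : dist (x + δ') (x + δ) < η := by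
      rw [dist_eq_norm]
      have : x + δ' - (x + δ) = -(δ - δ') := by abel
      rw [this, norm_neg]
      exact lt_of_le_of_lt hδδ' hη'ltη
    have h2 : dist (g (x + δ')) (g (x + δ)) < s1 := hηc _ hmem2 _ hmem1 hdist
    calc ‖g x - g (x + δ)‖ ≤ ‖g x - g (x + δ')‖ + ‖g (x + δ') - g (x + δ)‖ := by
          have := norm_sub_le_norm_sub_add_norm_sub (g x) (g (x + δ')) (g (x + δ))
          exact this
      _ ≤ εz + s1 := add_le_add h1 (le_of_lt (by rwa [dist_eq_norm] at h2))
  -- extract a coupling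
  have hWlt : Winf P0 P < ENNReal.ofReal ε + ENNReal.ofReal η' :=
    lt_of_le_of_lt hW (ENNReal.lt_add_right ENNReal.ofReal_ne_top
      (by simpa using (ENNReal.ofReal_pos.mpr hη'pos).ne'))
  rw [Winf] at hWlt
  obtain ⟨π, hπ⟩ := iInf_lt_iff.mp hWlt
  obtain ⟨hπmarg, hπess⟩ := iInf_lt_iff.mp hπ
  have hπess' : essSup (fun p => (‖p.1 - p.2‖₊ : ℝ≥0∞)) π < ENNReal.ofReal (ε + η') := by
    rwa [ENNReal.ofReal_add hε hη'pos.le]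
  have haedist : ∀ᵐ p ∂π, ‖p.1 - p.2‖ ≤ ε + η' := by
    filter_upwards [ae_lt_of_essSup_lt hπess'] with p hp
    rw [← ENNReal.ofReal_coe_nnreal, coe_nnnorm] at hp
    exact le_of_lt ((ENNReal.ofReal_lt_ofReal_iff_of_nonneg (norm_nonneg _)).mp hp)
  -- π is a probability measure
  have hπfst : π.map Prod.fst = P0 := hπmarg.1
  have hπsnd : π.map Prod.snd = P := hπmarg.2
  have hπuniv : π Set.univ = 1 := by
    have h := congrArg (fun μ : Measure (Fin d0 → ℝ) => μ Set.univ) hπfst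
    simpa [Measure.map_apply measurable_fst MeasurableSet.univ] using h
  haveI : IsProbabilityMeasure π := ⟨hπuniv⟩
  -- a.e. the first coordinate is in K
  have haeK : ∀ᵐ p ∂π, p.1 ∈ K := by
    have hKm : MeasurableSet K := hK.isClosed.measurableSet
    have hz : π (Prod.fst ⁻¹' Kᶜ) = 0 := by
      rw [← Measure.map_apply measurable_fst hKm.compl, hπfst]
      exact hKsupp
    rw [ae_iff]
    convert hz using 2
    rfl
  -- main a.e. bound
  have hmain : ∀ᵐ p ∂π, ℓ (ginv (g p.2)) ≤ F p.1 + c := by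
    filter_upwards [haeK, haedist] with p hpK hpd
    have hp2 : p.1 + (p.2 - p.1) = p.2 := by abel
    have hδz : ‖g p.2 - g p.1‖ ≤ εz + s1 := by
      have := hgest p.1 hpK (p.2 - p.1) (by rwa [norm_sub_rev] at hpd)
      rw [hp2] at this
      rwa [norm_sub_rev] at this
    set δz : Fin d → ℝ := g p.2 - g p.1 with hδzdef
    have hεs : 0 < εz + s1 := by linarith
    set δz'' : Fin d → ℝ := (εz / (εz + s1)) • δz with hδz''def
    have hδz''norm : ‖δz''‖ ≤ εz := by
      rw [hδz''def, norm_smul, Real.norm_eq_abs, abs_of_nonneg (by positivity)]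
      calc εz / (εz + s1) * ‖δz‖ ≤ εz / (εz + s1) * (εz + s1) := by
            apply mul_le_mul_of_nonneg_left hδz (by positivity)
        _ = εz := div_mul_cancel₀ _ hεs.ne'
    have hδzdiff : ‖δz - δz''‖ ≤ s1 := by
      have : δz - δz'' = (s1 / (εz + s1)) • δz := by
        symm
        rw [hδz''def, eq_sub_iff_add_eq, ← add_smul,
          show s1 / (εz + s1) + εz / (εz + s1) = 1 from by field_simp; ring, one_smul]
      rw [this, norm_smul, Real.norm_eq_abs, abs_of_nonneg (by positivity)]
      calc s1 / (εz + s1) * ‖δz‖ ≤ s1 / (εz + s1) * (εz + s1) := by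
            apply mul_le_mul_of_nonneg_left hδz (by positivity)
        _ = s1 := div_mul_cancel₀ _ hεs.ne'
    have hgp1 : ‖g p.1‖ ≤ R0 := hR0K p.1 hpK
    have ha : g p.1 + δz ∈ Metric.closedBall (0 : Fin d → ℝ) (R0 + εz + 1) := by
      rw [mem_closedBall_zero_iff]
      calc ‖g p.1 + δz‖ ≤ ‖g p.1‖ + ‖δz‖ := norm_add_le _ _
        _ ≤ R0 + (εz + s1) := add_le_add hgp1 hδz
        _ ≤ R0 + εz + 1 := by linarith
    have hb : g p.1 + δz'' ∈ Metric.closedBall (0 : Fin d → ℝ) (R0 + εz + 1) := by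
      rw [mem_closedBall_zero_iff]
      calc ‖g p.1 + δz''‖ ≤ ‖g p.1‖ + ‖δz''‖ := norm_add_le _ _
        _ ≤ R0 + εz := add_le_add hgp1 hδz''norm
        _ ≤ R0 + εz + 1 := by linarith
    have hd : dist (g p.1 + δz) (g p.1 + δz'') < s := by
      rw [dist_eq_norm]
      have : g p.1 + δz - (g p.1 + δz'') = δz - δz'' := by abel
      rw [this]
      exact lt_of_le_of_lt hδzdiff hs1lts
    have hclose := hsc _ ha _ hb hd
    rw [Function.comp, Function.comp, Real.dist_eq] at hclose
    have habs := abs_lt.mp hclose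
    have hgeq : g p.1 + δz = g p.2 := by rw [hδzdef]; abel
    have h1 : ℓ (ginv (g p.2)) ≤ ℓ (ginv (g p.1 + δz'')) + c := by
      rw [← hgeq]
      linarith [habs.2]
    exact le_trans h1 (add_le_add_left (hFle p.1 δz'' hδz''norm) _)
  -- integrability
  have hint1 : Integrable (fun p : (Fin d0 → ℝ) × (Fin d0 → ℝ) => ℓ (ginv (g p.2))) π :=
    Integrable.mono' (integrable_const M)
      ((hℓc.comp (hginv.comp (hg.comp continuous_snd))).aestronglyMeasurable)
      (Filter.Eventually.of_forall fun p => by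
        rw [Real.norm_eq_abs, abs_of_nonneg (hℓ0 _)]; exact hℓM _)
  have hintF : Integrable (fun p : (Fin d0 → ℝ) × (Fin d0 → ℝ) => F p.1) π :=
    Integrable.mono' (integrable_const M)
      ((hFc.comp continuous_fst).aestronglyMeasurable)
      (Filter.Eventually.of_forall fun p => by
        rw [Real.norm_eq_abs, abs_of_nonneg (hF0 _)]; exact hFM _)
  -- the chain of (in)equalities
  have hae := hmanifold P hPprob hW
  calc ∫ x', ℓ x' ∂P = ∫ x', ℓ (ginv (g x')) ∂P := integral_congr_ae hae
    _ = ∫ p, ℓ (ginv (g p.2)) ∂π := by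
        rw [← hπsnd]
        exact integral_map measurable_snd.aemeasurable
          ((hℓc.comp (hginv.comp hg)).aestronglyMeasurable)
    _ ≤ ∫ p, (F p.1 + c) ∂π :=
        integral_mono_ae hint1 (hintF.add (integrable_const c)) hmain
    _ = (∫ p, F p.1 ∂π) + c := by
        rw [integral_add hintF (integrable_const c), integral_const]
        simp
    _ = (∫ x, F x ∂P0) + c := by
        rw [← hπfst]
        congr 1
        exact (integral_map measurable_fst.aemeasurable hFc.aestronglyMeasurable).symm
end

section
/- If a model satisfies the on-manifold robustness bound E_{x∼P_0}[ sup_{‖δ_z‖_∞ ≤ ε_z} |ℓ(θ, g^{-1}(g(x)+δ_z)) − ℓ(θ,x)| ] ≤ τ and the hypothesis of Lemma 1 holds, then the OOD generalization gap satisfies γ(ε,∞) ≤ τ for all ε with induced latent radius at most ε_z, where γ(ε,∞) = | sup_{P∈P(P_0,ε)} E_{x'∼P}[ℓ(θ,x')] − E_{x∼P_0}[ℓ(θ,x)] |. -/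
open MeasureTheory ENNReal NNReal

lemma Winf_self {E : Type*} [MeasurableSpace E] [NormedAddCommGroup E]
    [BorelSpace E] [SecondCountableTopology E] (P : Measure E) : Winf P P = 0 := by
  have hdiag : Measurable (fun x : E => (x, x)) := measurable_id.prodMk measurable_id
  have h1 : (P.map fun x => (x, x)).map Prod.fst = P := by
    rw [Measure.map_map measurable_fst hdiag]; exact Measure.map_id
  have h2 : (P.map fun x => (x, x)).map Prod.snd = P := by
    rw [Measure.map_map measurable_snd hdiag]; exact Measure.map_id
  refine le_antisymm (le_trans (iInf₂_le (P.map fun x => (x, x)) ⟨h1, h2⟩) ?_) zero_le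
  rw [essSup_map_measure
    (show Measurable (fun p : E × E => (‖p.1 - p.2‖₊ : ℝ≥0∞)) from
      (measurable_fst.sub measurable_snd).nnnorm.coe_nnreal_ennreal).aemeasurable
    hdiag.aemeasurable]
  simp only [Function.comp_def, sub_self, nnnorm_zero, ENNReal.coe_zero]
  exact le_of_eq essSup_const_bot

/-- If a model satisfies the on-manifold robustness bound with error `τ` and the
conclusion of Lemma 1 holds, then the OOD generalization gap satisfies
`γ(ε,∞) = |sup_{P∈P(P_0,ε)} E_P[ℓ] − E_{P_0}[ℓ]| ≤ τ`. -/
theorem stmt15 (d0 d : ℕ) (ε εz τ M : ℝ) (hε : 0 ≤ ε) (hεz : 0 ≤ εz)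
    (g : (Fin d0 → ℝ) → (Fin d → ℝ)) (hg : Continuous g)
    (ginv : (Fin d → ℝ) → (Fin d0 → ℝ)) (hginv : Continuous ginv)
    (ℓ : (Fin d0 → ℝ) → ℝ) (hℓc : Continuous ℓ)
    (hℓ0 : ∀ x, 0 ≤ ℓ x) (hℓM : ∀ x, ℓ x ≤ M)
    (hrecon : ∀ x, ℓ (ginv (g x)) = ℓ x)
    (hinduced : ∀ x δx : Fin d0 → ℝ, ‖δx‖ ≤ ε → ‖g x - g (x + δx)‖ ≤ εz)
    (P0 : Measure (Fin d0 → ℝ)) [IsProbabilityMeasure P0]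
    (hrobust : ∫ x, sSup {r : ℝ | ∃ δz : Fin d → ℝ, ‖δz‖ ≤ εz ∧
        r = |ℓ (ginv (g x + δz)) - ℓ x|} ∂P0 ≤ τ)
    (hlemma1 : sSup {r : ℝ | ∃ P : Measure (Fin d0 → ℝ), IsProbabilityMeasure P ∧
          Winf P0 P ≤ ENNReal.ofReal ε ∧ r = ∫ x', ℓ x' ∂P}
        ≤ ∫ x, sSup {r : ℝ | ∃ δz : Fin d → ℝ, ‖δz‖ ≤ εz ∧
            r = ℓ (ginv (g x + δz))} ∂P0) :
    |sSup {r : ℝ | ∃ P : Measure (Fin d0 → ℝ), IsProbabilityMeasure P ∧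
          Winf P0 P ≤ ENNReal.ofReal ε ∧ r = ∫ x', ℓ x' ∂P}
        - ∫ x, ℓ x ∂P0| ≤ τ := by
  have hM0 : (0 : ℝ) ≤ M := le_trans (hℓ0 0) (hℓM 0)
  set A : (Fin d0 → ℝ) → Set ℝ := fun x =>
    {r : ℝ | ∃ δz : Fin d → ℝ, ‖δz‖ ≤ εz ∧ r = ℓ (ginv (g x + δz))} with hA
  set B : (Fin d0 → ℝ) → Set ℝ := fun x =>
    {r : ℝ | ∃ δz : Fin d → ℝ, ‖δz‖ ≤ εz ∧ r = |ℓ (ginv (g x + δz)) - ℓ x|} with hB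
  set S : Set ℝ := {r : ℝ | ∃ P : Measure (Fin d0 → ℝ), IsProbabilityMeasure P ∧
          Winf P0 P ≤ ENNReal.ofReal ε ∧ r = ∫ x', ℓ x' ∂P} with hS
  -- compact ball
  set K : Set (Fin d → ℝ) := Metric.closedBall 0 εz with hKdef
  have hK : IsCompact K := isCompact_closedBall 0 εz
  have hmemK : ∀ δ : Fin d → ℝ, δ ∈ K ↔ ‖δ‖ ≤ εz := by
    intro δ; simp [hKdef, Metric.mem_closedBall, dist_zero_right]
  -- basic facts about A and B
  have hAimage : ∀ x, A x = (fun δ => ℓ (ginv (g x + δ))) '' K := by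
    intro x; ext r
    simp only [hA, Set.mem_setOf_eq, Set.mem_image]
    exact ⟨fun ⟨δ, h1, h2⟩ => ⟨δ, (hmemK δ).2 h1, h2.symm⟩,
      fun ⟨δ, h1, h2⟩ => ⟨δ, (hmemK δ).1 h1, h2.symm⟩⟩
  have hBimage : ∀ x, B x = (fun δ => |ℓ (ginv (g x + δ)) - ℓ x|) '' K := by
    intro x; ext r
    simp only [hB, Set.mem_setOf_eq, Set.mem_image]
    exact ⟨fun ⟨δ, h1, h2⟩ => ⟨δ, (hmemK δ).2 h1, h2.symm⟩,
      fun ⟨δ, h1, h2⟩ => ⟨δ, (hmemK δ).1 h1, h2.symm⟩⟩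
  have hAmem : ∀ x, ℓ x ∈ A x := by
    intro x
    exact ⟨0, by simpa using hεz, by rw [add_zero, hrecon]⟩
  have hBmem : ∀ x, (0 : ℝ) ∈ B x := by
    intro x
    exact ⟨0, by simpa using hεz, by rw [add_zero, hrecon, sub_self, abs_zero]⟩
  have hAbdd : ∀ x, BddAbove (A x) := by
    rintro x
    exact ⟨M, by rintro r ⟨δ, -, rfl⟩; exact hℓM _⟩
  have hBboundM : ∀ x r, r ∈ B x → r ≤ M := by
    rintro x r ⟨δ, -, rfl⟩
    rw [abs_sub_le_iff]
    constructor <;> [linarith [hℓM (ginv (g x + δ)), hℓ0 x];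
      linarith [hℓM x, hℓ0 (ginv (g x + δ))]]
  have hBbdd : ∀ x, BddAbove (B x) := fun x => ⟨M, fun r hr => hBboundM x r hr⟩
  -- the pointwise functions
  set f : (Fin d0 → ℝ) → ℝ := fun x => sSup (A x) with hf
  set h : (Fin d0 → ℝ) → ℝ := fun x => sSup (B x) with hh
  have hh0 : ∀ x, 0 ≤ h x := fun x => le_csSup (hBbdd x) (hBmem x)
  have hhM : ∀ x, h x ≤ M := fun x => csSup_le ⟨0, hBmem x⟩ (hBboundM x)
  have hfle : ∀ x, f x ≤ ℓ x + h x := by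
    intro x
    refine csSup_le ⟨ℓ x, hAmem x⟩ ?_
    rintro r ⟨δ, hδ, rfl⟩
    have h1 : |ℓ (ginv (g x + δ)) - ℓ x| ∈ B x := ⟨δ, hδ, rfl⟩
    have := le_csSup (hBbdd x) h1
    have h2 : ℓ (ginv (g x + δ)) - ℓ x ≤ |ℓ (ginv (g x + δ)) - ℓ x| := le_abs_self _
    linarith
  have hf0 : ∀ x, 0 ≤ f x := fun x =>
    le_trans (hℓ0 x) (le_csSup (hAbdd x) (hAmem x))
  -- continuity of h
  have hhcont : Continuous h := by
    have : h = fun x => sSup ((fun δ => |ℓ (ginv (g x + δ)) - ℓ x|) '' K) := by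
      funext x; exact congrArg sSup (hBimage x)
    rw [this]
    refine hK.continuous_sSup ?_
    have : Continuous fun p : (Fin d0 → ℝ) × (Fin d → ℝ) =>
        |ℓ (ginv (g p.1 + p.2)) - ℓ p.1| :=
      (((hℓc.comp (hginv.comp ((hg.comp continuous_fst).add continuous_snd))).sub
        (hℓc.comp continuous_fst))).abs
    exact this
  -- integrability
  have hℓint : Integrable ℓ P0 := by
    refine (integrable_const M).mono' hℓc.aestronglyMeasurable ?_
    exact ae_of_all _ fun x => by
      rw [Real.norm_eq_abs, abs_of_nonneg (hℓ0 x)]; exact hℓM x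
  have hhint : Integrable h P0 := by
    refine (integrable_const M).mono' hhcont.aestronglyMeasurable ?_
    exact ae_of_all _ fun x => by
      rw [Real.norm_eq_abs, abs_of_nonneg (hh0 x)]; exact hhM x
  -- ∫ f ≤ ∫ ℓ + ∫ h
  have hint_f : ∫ x, f x ∂P0 ≤ ∫ x, ℓ x ∂P0 + ∫ x, h x ∂P0 := by
    calc ∫ x, f x ∂P0 ≤ ∫ x, (ℓ x + h x) ∂P0 :=
          integral_mono_of_nonneg (ae_of_all _ hf0) (hℓint.add hhint)
            (ae_of_all _ hfle)
      _ = ∫ x, ℓ x ∂P0 + ∫ x, h x ∂P0 := integral_add hℓint hhint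
  -- ∫ ℓ dP0 ∈ S
  have hmemS : (∫ x, ℓ x ∂P0) ∈ S := by
    refine ⟨P0, inferInstance, ?_, rfl⟩
    rw [Winf_self]; exact zero_le
  have hSbdd : BddAbove S := by
    refine ⟨M, ?_⟩
    rintro r ⟨P, hP, -, rfl⟩
    calc ∫ x', ℓ x' ∂P ≤ ∫ _x', M ∂P :=
          integral_mono_of_nonneg (ae_of_all _ hℓ0) (integrable_const M)
            (ae_of_all _ hℓM)
      _ = M := by simp
  have hIleS : ∫ x, ℓ x ∂P0 ≤ sSup S := le_csSup hSbdd hmemS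
  have hSle : sSup S ≤ ∫ x, ℓ x ∂P0 + τ := by
    refine le_trans hlemma1 ?_
    refine le_trans hint_f ?_
    linarith [hrobust]
  rw [abs_of_nonneg (by linarith : (0:ℝ) ≤ sSup S - ∫ x, ℓ x ∂P0)]
  linarith
end
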